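/- arXiv:2002.00601 — 5 statements merged into one kernel-verified Lean document; each statement's English description precedes it below -/
import Mathlib

section
/- Let u, v : ℝ → ℝ be smooth functions with 0 < v(s) < π for all s, and suppose the curve α(s) := Φ(u(s), v(s)) on the timelike conical surface satisfies ⟨α'(s), α'(s)⟩ = −1 for all s (α is timelike unit speed) and α''(s) − α(s) ≠ 0 for all s (α is non-geodesic in S³₁). Then ⟨p, α''(s) − α(s)⟩ = 0 for all s (i.e., α is a timelike rectifying curve with respect to p) if and only if for all s the vector α''(s) − α(s) is ⟨,⟩-orthogonal to both partial derivatives ∂Φ/∂u(u(s), v(s)) and ∂Φ/∂v(u(s), v(s)) (i.e., α is a geodesic of the timelike conical surface). -/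
open Real

/-- The Minkowski scalar product on `ℝ⁴₁`:
`⟨x,y⟩ = -x₁y₁ + x₂y₂ + x₃y₃ + x₄y₄`. -/
noncomputable def mdot (x y : Fin 4 → ℝ) : ℝ :=
  -(x 0 * y 0) + x 1 * y 1 + x 2 * y 2 + x 3 * y 3

lemma mdot_comm (x y : Fin 4 → ℝ) : mdot x y = mdot y x := by
  simp [mdot]; ring

lemma mdot_add_left (x y z : Fin 4 → ℝ) : mdot (x + y) z = mdot x z + mdot y z := by
  simp [mdot]; ring

lemma mdot_add_right (x y z : Fin 4 → ℝ) : mdot x (y + z) = mdot x y + mdot x z := by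
  simp [mdot]; ring

lemma mdot_sub_right (x y z : Fin 4 → ℝ) : mdot x (y - z) = mdot x y - mdot x z := by
  simp [mdot]; ring

lemma mdot_sub_left (x y z : Fin 4 → ℝ) : mdot (x - y) z = mdot x z - mdot y z := by
  simp [mdot]; ring

lemma mdot_smul_left (a : ℝ) (x y : Fin 4 → ℝ) : mdot (a • x) y = a * mdot x y := by
  simp [mdot, Pi.smul_apply, smul_eq_mul]; ring

lemma mdot_smul_right (a : ℝ) (x y : Fin 4 → ℝ) : mdot x (a • y) = a * mdot x y := by
  simp [mdot, Pi.smul_apply, smul_eq_mul]; ring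

/-- Product rule for `mdot`. -/
lemma hasDerivAt_mdot {f g : ℝ → Fin 4 → ℝ} {f' g' : Fin 4 → ℝ} {s : ℝ}
    (hf : HasDerivAt f f' s) (hg : HasDerivAt g g' s) :
    HasDerivAt (fun t => mdot (f t) (g t)) (mdot f' (g s) + mdot (f s) g') s := by
  have hfi : ∀ i, HasDerivAt (fun t => f t i) (f' i) s := fun i => hasDerivAt_pi.mp hf i
  have hgi : ∀ i, HasDerivAt (fun t => g t i) (g' i) s := fun i => hasDerivAt_pi.mp hg i
  have H := ((((hfi 0).mul (hgi 0)).neg.add ((hfi 1).mul (hgi 1))).add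
      ((hfi 2).mul (hgi 2))).add ((hfi 3).mul (hgi 3))
  refine H.congr_deriv ?_
  simp [mdot]; ring

/-- A timelike unit speed non-geodesic curve `α(s) = Φ(u(s), v(s))` on the timelike
conical surface `Φ(u,v) = cos v • p + sin v • γ(u)` is a timelike rectifying curve with
respect to the apex `p` iff it is a geodesic of the conical surface. -/
theorem timelike_rectifying_iff_geodesic_of_cone
    (p : Fin 4 → ℝ) (hp : mdot p p = 1)
    (γ : ℝ → Fin 4 → ℝ) (hγsm : ContDiff ℝ (⊤ : ℕ∞) γ)
    (hγ1 : ∀ u, mdot (γ u) (γ u) = 1)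
    (hγp : ∀ u, mdot (γ u) p = 0)
    (hγ' : ∀ u, mdot (deriv γ u) (deriv γ u) = -1)
    (Φ : ℝ → ℝ → Fin 4 → ℝ)
    (hΦ : ∀ u v, Φ u v = Real.cos v • p + Real.sin v • γ u)
    (u v : ℝ → ℝ) (husm : ContDiff ℝ (⊤ : ℕ∞) u) (hvsm : ContDiff ℝ (⊤ : ℕ∞) v)
    (hvrange : ∀ s, 0 < v s ∧ v s < Real.pi)
    (α : ℝ → Fin 4 → ℝ) (hα : ∀ s, α s = Φ (u s) (v s))
    (hunit : ∀ s, mdot (deriv α s) (deriv α s) = -1)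
    (hnongeo : ∀ s, deriv (deriv α) s - α s ≠ 0) :
    (∀ s, mdot p (deriv (deriv α) s - α s) = 0) ↔
      (∀ s, mdot (deriv (deriv α) s - α s) (deriv (fun u' => Φ u' (v s)) (u s)) = 0 ∧
            mdot (deriv (deriv α) s - α s) (deriv (fun v' => Φ (u s) v') (v s)) = 0) := by
  -- basic differentiability
  have hγd : Differentiable ℝ γ := hγsm.differentiable (by simp)
  have hud : Differentiable ℝ u := husm.differentiable (by simp)
  have hvd : Differentiable ℝ v := hvsm.differentiable (by simp)
  -- derived scalar products of γ
  have hγ'γ : ∀ t, mdot (deriv γ t) (γ t) = 0 := by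
    intro t
    have H : HasDerivAt (fun t => mdot (γ t) (γ t))
        (mdot (deriv γ t) (γ t) + mdot (γ t) (deriv γ t)) t :=
      hasDerivAt_mdot (hγd t).hasDerivAt (hγd t).hasDerivAt
    have H0 : HasDerivAt (fun t => mdot (γ t) (γ t)) 0 t := by
      have : (fun t => mdot (γ t) (γ t)) = fun _ => (1 : ℝ) := funext hγ1
      rw [this]; exact hasDerivAt_const _ _
    have := H.unique H0
    rw [mdot_comm (γ t) (deriv γ t)] at this
    linarith
  have hγ'p : ∀ t, mdot (deriv γ t) p = 0 := by
    intro t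
    have H : HasDerivAt (fun t => mdot (γ t) p)
        (mdot (deriv γ t) p + mdot (γ t) 0) t :=
      hasDerivAt_mdot (hγd t).hasDerivAt (hasDerivAt_const t p)
    have H0 : HasDerivAt (fun t => mdot (γ t) p) 0 t := by
      have : (fun t => mdot (γ t) p) = fun _ => (0 : ℝ) := funext hγp
      rw [this]; exact hasDerivAt_const _ _
    have h := H.unique H0
    have hz : mdot (γ t) 0 = 0 := by simp [mdot]
    rw [hz] at h; linarith
  -- explicit form of α
  have hαeq : α = fun s => Real.cos (v s) • p + Real.sin (v s) • γ (u s) := by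
    funext s; rw [hα s, hΦ]
  -- first derivative of α
  set A : ℝ → Fin 4 → ℝ := fun s =>
    (-Real.sin (v s) * deriv v s) • p + (Real.cos (v s) * deriv v s) • γ (u s)
      + (Real.sin (v s) * deriv u s) • deriv γ (u s) with hA
  have hαA : ∀ s, HasDerivAt α (A s) s := by
    intro s
    rw [hαeq]
    have h1 : HasDerivAt (fun s => Real.cos (v s)) (-Real.sin (v s) * deriv v s) s := by
      exact (Real.hasDerivAt_cos (v s)).comp s (hvd s).hasDerivAt
    have h2 : HasDerivAt (fun s => Real.sin (v s)) (Real.cos (v s) * deriv v s) s := by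
      exact (Real.hasDerivAt_sin (v s)).comp s (hvd s).hasDerivAt
    have h3 : HasDerivAt (fun s => γ (u s)) (deriv u s • deriv γ (u s)) s :=
      (hγd (u s)).hasDerivAt.scomp s (hud s).hasDerivAt
    have := (h1.smul_const p).add (h2.smul h3)
    refine this.congr_deriv ?_
    rw [hA]
    simp only [smul_smul]
    module
  have hderivα : deriv α = A := funext fun s => (hαA s).deriv
  -- smoothness of α and its derivative, second derivative exists
  have hαsm : ContDiff ℝ (⊤ : ℕ∞) α := by
    rw [hαeq]
    exact ((Real.contDiff_cos.comp hvsm).smul contDiff_const).add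
      ((Real.contDiff_sin.comp hvsm).smul (hγsm.comp husm))
  have hα'd : Differentiable ℝ (deriv α) := by
    have := (contDiff_infty_iff_deriv.mp hαsm).2
    exact this.differentiable (by simp)
  have hα'' : ∀ s, HasDerivAt (deriv α) (deriv (deriv α) s) s :=
    fun s => (hα'd s).hasDerivAt
  -- pointwise scalar products
  have hpγ : ∀ t, mdot p (γ t) = 0 := fun t => (mdot_comm _ _).trans (hγp t)
  have hpγ' : ∀ t, mdot p (deriv γ t) = 0 := fun t => (mdot_comm _ _).trans (hγ'p t)
  have hγγ' : ∀ t, mdot (γ t) (deriv γ t) = 0 := fun t => (mdot_comm _ _).trans (hγ'γ t)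
  have m1 : ∀ s, mdot (α s) (α s) = 1 := by
    intro s
    rw [hαeq]
    simp only [mdot_add_left, mdot_add_right, mdot_smul_left, mdot_smul_right,
      hp, hγ1, hγp, hpγ]
    have := Real.sin_sq_add_cos_sq (v s)
    nlinarith [this]
  have m2 : ∀ s, mdot (α s) (deriv α s) = 0 := by
    intro s
    have H : HasDerivAt (fun t => mdot (α t) (α t))
        (mdot (A s) (α s) + mdot (α s) (A s)) s :=
      hasDerivAt_mdot (hαA s) (hαA s)
    have H0 : HasDerivAt (fun t => mdot (α t) (α t)) 0 s := by
      have : (fun t => mdot (α t) (α t)) = fun _ => (1 : ℝ) := funext m1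
      rw [this]; exact hasDerivAt_const _ _
    have h := H.unique H0
    rw [mdot_comm (A s) (α s)] at h
    rw [hderivα]
    linarith
  have m4 : ∀ s, mdot (α s) (deriv (deriv α) s) = 1 := by
    intro s
    have H : HasDerivAt (fun t => mdot (α t) (deriv α t))
        (mdot (A s) (deriv α s) + mdot (α s) (deriv (deriv α) s)) s :=
      hasDerivAt_mdot (hαA s) (hα'' s)
    have H0 : HasDerivAt (fun t => mdot (α t) (deriv α t)) 0 s := by
      have : (fun t => mdot (α t) (deriv α t)) = fun _ => (0 : ℝ) := funext m2
      rw [this]; exact hasDerivAt_const _ _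
    have h := H.unique H0
    have hAA : mdot (A s) (deriv α s) = -1 := by
      rw [show A s = deriv α s from (congrFun hderivα s).symm]; exact hunit s
    linarith
  have m5 : ∀ s, mdot (deriv α s) (deriv (deriv α) s) = 0 := by
    intro s
    have H : HasDerivAt (fun t => mdot (deriv α t) (deriv α t))
        (mdot (deriv (deriv α) s) (deriv α s) + mdot (deriv α s) (deriv (deriv α) s)) s :=
      hasDerivAt_mdot (hα'' s) (hα'' s)
    have H0 : HasDerivAt (fun t => mdot (deriv α t) (deriv α t)) 0 s := by
      have : (fun t => mdot (deriv α t) (deriv α t)) = fun _ => (-1 : ℝ) := funext hunit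
      rw [this]; exact hasDerivAt_const _ _
    have h := H.unique H0
    rw [mdot_comm (deriv (deriv α) s) (deriv α s)] at h
    linarith
  -- main pointwise argument
  have key : ∀ s,
      (mdot p (deriv (deriv α) s - α s) = 0 ↔
        (mdot (deriv (deriv α) s - α s) (deriv (fun u' => Φ u' (v s)) (u s)) = 0 ∧
         mdot (deriv (deriv α) s - α s) (deriv (fun v' => Φ (u s) v') (v s)) = 0)) := by
    intro s
    set β : Fin 4 → ℝ := deriv (deriv α) s - α s with hβ
    have hsin : 0 < Real.sin (v s) :=
      Real.sin_pos_of_pos_of_lt_pi (hvrange s).1 (hvrange s).2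
    -- the partial derivatives
    have hΦu : deriv (fun u' => Φ u' (v s)) (u s) = Real.sin (v s) • deriv γ (u s) := by
      have hfe : (fun u' => Φ u' (v s))
          = fun u' => Real.cos (v s) • p + Real.sin (v s) • γ u' := by
        funext u'; rw [hΦ]
      rw [hfe]
      have H := (hasDerivAt_const (u s) (Real.cos (v s) • p)).add
        ((hγd (u s)).hasDerivAt.const_smul (Real.sin (v s)))
      rw [(show HasDerivAt (fun u' => Real.cos (v s) • p + Real.sin (v s) • γ u') _ (u s) from H).deriv, zero_add]
    set Φv : Fin 4 → ℝ := (-Real.sin (v s)) • p + Real.cos (v s) • γ (u s) with hΦvdef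
    have hΦv : deriv (fun v' => Φ (u s) v') (v s) = Φv := by
      have hfe : (fun v' => Φ (u s) v')
          = fun v' => Real.cos v' • p + Real.sin v' • γ (u s) := by
        funext v'; rw [hΦ]
      rw [hfe]
      have h1 : HasDerivAt (fun v' => Real.cos v' • p) ((-Real.sin (v s)) • p) (v s) :=
        (Real.hasDerivAt_cos (v s)).smul_const p
      have h2 : HasDerivAt (fun v' => Real.sin v' • γ (u s))
          (Real.cos (v s) • γ (u s)) (v s) :=
        (Real.hasDerivAt_sin (v s)).smul_const (γ (u s))
      exact (h1.add h2).deriv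
    rw [hΦu, hΦv]
    -- β is orthogonal to α and to α'
    have hβα : mdot (α s) β = 0 := by
      rw [hβ, mdot_sub_right, m4 s, m1 s]; ring
    have hβα' : mdot (deriv α s) β = 0 := by
      rw [hβ, mdot_sub_right, m5 s, mdot_comm (deriv α s) (α s), m2 s]; ring
    -- p = cos v • α - sin v • Φv
    have hpeq : Real.cos (v s) • α s - Real.sin (v s) • Φv = p := by
      rw [hαeq, hΦvdef]
      have h := Real.sin_sq_add_cos_sq (v s)
      funext i
      simp only [Pi.sub_apply, Pi.add_apply, Pi.smul_apply, smul_eq_mul]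
      linear_combination (p i) * h
    have hpβ : mdot p β = - Real.sin (v s) * mdot Φv β := by
      rw [← hpeq, mdot_sub_left, mdot_smul_left, mdot_smul_left, hβα]; ring
    -- α' = u' • Φu + v' • Φv
    have hαdec : deriv α s = deriv u s • (Real.sin (v s) • deriv γ (u s)) + deriv v s • Φv := by
      rw [hderivα, hA, hΦvdef]
      simp only [smul_add, smul_smul]
      module
    have hsum : deriv u s * (Real.sin (v s) * mdot (deriv γ (u s)) β)
        + deriv v s * mdot Φv β = 0 := by
      have := hβα'
      rw [hαdec, mdot_add_left, mdot_smul_left, mdot_smul_left, mdot_smul_left] at this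
      linarith
    -- u' ≠ 0 from unit speed
    have hAA' : mdot (deriv α s) (deriv α s)
        = -(deriv u s)^2 * Real.sin (v s)^2 + (deriv v s)^2 := by
      rw [hderivα, hA]
      simp only [mdot_add_left, mdot_add_right, mdot_smul_left, mdot_smul_right,
        hp, hγ1, hγp, hpγ, hγ' , hγ'γ, hγ'p, hpγ', hγγ']
      have := Real.sin_sq_add_cos_sq (v s)
      nlinarith [this]
    have hu' : deriv u s ≠ 0 := by
      intro h0
      have := hunit s
      rw [hAA', h0] at this
      nlinarith [sq_nonneg (deriv v s)]
    constructor
    · intro h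
      have hΦvβ : mdot Φv β = 0 := by
        have h2 : Real.sin (v s) * mdot Φv β = 0 := by
          rw [hpβ] at h; linarith
        exact (mul_eq_zero.mp h2).resolve_left hsin.ne'
      have hΦuβ : mdot (deriv γ (u s)) β = 0 := by
        rw [hΦvβ, mul_zero, add_zero] at hsum
        rcases mul_eq_zero.mp hsum with h | h
        · exact absurd h hu'
        · rcases mul_eq_zero.mp h with h | h
          · exact absurd h hsin.ne'
          · exact h
      constructor
      · rw [mdot_comm, mdot_smul_left, hΦuβ, mul_zero]
      · rw [mdot_comm]; exact hΦvβ
    · rintro ⟨h1, h2⟩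
      rw [mdot_comm] at h2
      rw [hpβ, h2, mul_zero]
  constructor
  · intro h s; exact (key s).mp (h s)
  · intro h s; exact (key s).mpr (h s)
end

section
/- Let (α, N, B, κ_g, τ_g) be a Frenet apparatus of a timelike unit speed non-geodesic curve in S³₁, and let p ∈ S³₁ satisfy ⟨p, N(s)⟩ = 0 for all s ∈ ℝ (α is a timelike rectifying curve with respect to p). Then there exist constants μ₁, μ₂ ∈ ℝ with μ₂² − μ₁² < 1 such that τ_g(s)/κ_g(s) = μ₁·sinh(s) + μ₂·cosh(s) for all s ∈ ℝ. -/
open Real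

set_option maxHeartbeats 1000000

private noncomputable def Jm : Matrix (Fin 4) (Fin 4) ℝ := !![-1,0,0,0; 0,1,0,0; 0,0,1,0; 0,0,0,1]

private lemma JmJm : Jm * Jm = 1 := by
  ext i j
  fin_cases i <;> fin_cases j <;>
    simp [Jm, Matrix.mul_apply, Fin.sum_univ_four, Matrix.one_apply, Matrix.vecHead, Matrix.vecTail]

private lemma Jmdet : Jm.det = -1 := by
  simp [Jm, Matrix.det_succ_row_zero, Fin.sum_univ_four, Fin.sum_univ_three,
    Fin.succAbove, Matrix.vecHead, Matrix.vecTail]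

private lemma key_lin_alg (T A N B p : Fin 4 → ℝ)
    (hTT : mdot T T = -1) (hAA : mdot A A = 1) (hNN : mdot N N = 1) (hBB : mdot B B = 1)
    (hAT : mdot A T = 0) (hAN : mdot A N = 0) (hAB : mdot A B = 0)
    (hTN : mdot T N = 0) (hTB : mdot T B = 0) (hNB : mdot N B = 0)
    (hpp : mdot p p = 1) (hpN : mdot p N = 0) :
    (mdot p A) ^ 2 - (mdot p T) ^ 2 + (mdot p B) ^ 2 = 1 := by
  have hM : ∃ M : Matrix (Fin 4) (Fin 4) ℝ,
      M = !![T 0, T 1, T 2, T 3; A 0, A 1, A 2, A 3; N 0, N 1, N 2, N 3; B 0, B 1, B 2, B 3] :=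
    ⟨_, rfl⟩
  obtain ⟨M, hM⟩ := hM
  simp only [mdot] at hTT hAA hNN hBB hAT hAN hAB hTN hTB hNB hpp hpN
  have hMJM : M * Jm * M.transpose = Jm := by
    ext i j
    fin_cases i <;> fin_cases j <;>
      · simp [Jm, hM, Matrix.mul_apply, Fin.sum_univ_four, Matrix.vecHead, Matrix.vecTail]
        linarith
  have hdet : M.det ≠ 0 := by
    have hd : M.det * Jm.det * M.transpose.det = Jm.det := by
      rw [← Matrix.det_mul, ← Matrix.det_mul, hMJM]
    rw [Matrix.det_transpose, Jmdet] at hd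
    intro h; rw [h] at hd; norm_num at hd
  have h1 : M * (Jm * M.transpose * Jm) = 1 := by
    rw [← Matrix.mul_assoc, ← Matrix.mul_assoc, hMJM, JmJm]
  have h2 : (Jm * M.transpose * Jm) * M = 1 := mul_eq_one_comm.1 h1
  have h3 : M.transpose * Jm * M = Jm := by
    calc M.transpose * Jm * M = Jm * ((Jm * M.transpose * Jm) * M) := by
          rw [← Matrix.mul_assoc, ← Matrix.mul_assoc, ← Matrix.mul_assoc, JmJm, Matrix.one_mul]
      _ = Jm := by rw [h2, Matrix.mul_one]
  have e00 : -(T 0 * T 0) + A 0 * A 0 + N 0 * N 0 + B 0 * B 0 = -1 := by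
    have h := congrFun (congrFun h3 0) 0
    simp [Jm, hM, Matrix.mul_apply, Fin.sum_univ_four, Matrix.vecHead, Matrix.vecTail] at h
    linarith
  have e01 : -(T 0 * T 1) + A 0 * A 1 + N 0 * N 1 + B 0 * B 1 = 0 := by
    have h := congrFun (congrFun h3 0) 1
    simp [Jm, hM, Matrix.mul_apply, Fin.sum_univ_four, Matrix.vecHead, Matrix.vecTail] at h
    linarith
  have e02 : -(T 0 * T 2) + A 0 * A 2 + N 0 * N 2 + B 0 * B 2 = 0 := by
    have h := congrFun (congrFun h3 0) 2
    simp [Jm, hM, Matrix.mul_apply, Fin.sum_univ_four, Matrix.vecHead, Matrix.vecTail] at h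
    linarith
  have e03 : -(T 0 * T 3) + A 0 * A 3 + N 0 * N 3 + B 0 * B 3 = 0 := by
    have h := congrFun (congrFun h3 0) 3
    simp [Jm, hM, Matrix.mul_apply, Fin.sum_univ_four, Matrix.vecHead, Matrix.vecTail] at h
    linarith
  have e11 : -(T 1 * T 1) + A 1 * A 1 + N 1 * N 1 + B 1 * B 1 = 1 := by
    have h := congrFun (congrFun h3 1) 1
    simp [Jm, hM, Matrix.mul_apply, Fin.sum_univ_four, Matrix.vecHead, Matrix.vecTail] at h
    linarith
  have e12 : -(T 1 * T 2) + A 1 * A 2 + N 1 * N 2 + B 1 * B 2 = 0 := by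
    have h := congrFun (congrFun h3 1) 2
    simp [Jm, hM, Matrix.mul_apply, Fin.sum_univ_four, Matrix.vecHead, Matrix.vecTail] at h
    linarith
  have e13 : -(T 1 * T 3) + A 1 * A 3 + N 1 * N 3 + B 1 * B 3 = 0 := by
    have h := congrFun (congrFun h3 1) 3
    simp [Jm, hM, Matrix.mul_apply, Fin.sum_univ_four, Matrix.vecHead, Matrix.vecTail] at h
    linarith
  have e22 : -(T 2 * T 2) + A 2 * A 2 + N 2 * N 2 + B 2 * B 2 = 1 := by
    have h := congrFun (congrFun h3 2) 2
    simp [Jm, hM, Matrix.mul_apply, Fin.sum_univ_four, Matrix.vecHead, Matrix.vecTail] at h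
    linarith
  have e23 : -(T 2 * T 3) + A 2 * A 3 + N 2 * N 3 + B 2 * B 3 = 0 := by
    have h := congrFun (congrFun h3 2) 3
    simp [Jm, hM, Matrix.mul_apply, Fin.sum_univ_four, Matrix.vecHead, Matrix.vecTail] at h
    linarith
  have e33 : -(T 3 * T 3) + A 3 * A 3 + N 3 * N 3 + B 3 * B 3 = 1 := by
    have h := congrFun (congrFun h3 3) 3
    simp [Jm, hM, Matrix.mul_apply, Fin.sum_univ_four, Matrix.vecHead, Matrix.vecTail] at h
    linarith
  simp only [mdot]
  linear_combination (p 0 * p 0) * e00 - 2*(p 0 * p 1) * e01 - 2*(p 0 * p 2) * e02 - 2*(p 0 * p 3) * e03 + (p 1 * p 1) * e11 + 2*(p 1 * p 2) * e12 + 2*(p 1 * p 3) * e13 + (p 2 * p 2) * e22 + 2*(p 2 * p 3) * e23 + (p 3 * p 3) * e33 + hpp - (-(p 0 * N 0) + p 1 * N 1 + p 2 * N 2 + p 3 * N 3) * hpN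

private lemma mdot_hasDerivAt (p : Fin 4 → ℝ) {f : ℝ → Fin 4 → ℝ} {v : Fin 4 → ℝ} {s : ℝ}
    (hf : HasDerivAt f v s) : HasDerivAt (fun t => mdot p (f t)) (mdot p v) s := by
  have h : ∀ i : Fin 4, HasDerivAt (fun t => f t i) (v i) s := fun i =>
    ((ContinuousLinearMap.proj i : (Fin 4 → ℝ) →L[ℝ] ℝ).hasFDerivAt.comp_hasDerivAt s hf)
  simp only [mdot]
  exact ((((h 0).const_mul (p 0)).neg.add ((h 1).const_mul (p 1))).add
    ((h 2).const_mul (p 2))).add ((h 3).const_mul (p 3))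

/-- For a timelike rectifying curve in `S³₁`, the ratio `τ_g/κ_g` is of the form
`μ₁ sinh s + μ₂ cosh s` with `μ₂² - μ₁² < 1`. -/
theorem ratio_of_timelike_rectifying_curve
    (α N B : ℝ → Fin 4 → ℝ) (κg τg : ℝ → ℝ)
    (hαsm : ContDiff ℝ (⊤ : ℕ∞) α) (hNsm : ContDiff ℝ (⊤ : ℕ∞) N)
    (hBsm : ContDiff ℝ (⊤ : ℕ∞) B)
    (hκsm : ContDiff ℝ (⊤ : ℕ∞) κg) (hτsm : ContDiff ℝ (⊤ : ℕ∞) τg)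
    (hκpos : ∀ s, 0 < κg s)
    (hα1 : ∀ s, mdot (α s) (α s) = 1)
    (hT1 : ∀ s, mdot (deriv α s) (deriv α s) = -1)
    (hN1 : ∀ s, mdot (N s) (N s) = 1)
    (hB1 : ∀ s, mdot (B s) (B s) = 1)
    (hαT : ∀ s, mdot (α s) (deriv α s) = 0)
    (hαN : ∀ s, mdot (α s) (N s) = 0)
    (hαB : ∀ s, mdot (α s) (B s) = 0)
    (hTN : ∀ s, mdot (deriv α s) (N s) = 0)
    (hTB : ∀ s, mdot (deriv α s) (B s) = 0)
    (hNB : ∀ s, mdot (N s) (B s) = 0)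
    (hF1 : ∀ s, deriv (deriv α) s = α s + κg s • N s)
    (hF2 : ∀ s, deriv N s = κg s • deriv α s + τg s • B s)
    (hF3 : ∀ s, deriv B s = -τg s • N s)
    (p : Fin 4 → ℝ) (hp : mdot p p = 1)
    (hrect : ∀ s, mdot p (N s) = 0) :
    ∃ μ₁ μ₂ : ℝ, μ₂ ^ 2 - μ₁ ^ 2 < 1 ∧
      ∀ s, τg s / κg s = μ₁ * Real.sinh s + μ₂ * Real.cosh s := by
  have keyEq : (mdot p (α 0)) ^ 2 - (mdot p (deriv α 0)) ^ 2 + (mdot p (B 0)) ^ 2 = 1 :=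
    key_lin_alg (deriv α 0) (α 0) (N 0) (B 0) p (hT1 0) (hα1 0) (hN1 0) (hB1 0)
      (hαT 0) (hαN 0) (hαB 0) (hTN 0) (hTB 0) (hNB 0) hp (hrect 0)
  set a : ℝ → ℝ := fun s => mdot p (α s) with ha
  set b : ℝ → ℝ := fun s => mdot p (deriv α s) with hb
  set c : ℝ → ℝ := fun s => mdot p (B s) with hc
  -- differentiability
  have hαd : Differentiable ℝ α := hαsm.differentiable (by simp)
  have hTd : Differentiable ℝ (deriv α) :=
    ((contDiff_infty_iff_deriv.mp hαsm).2).differentiable (by simp)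
  have hNd : Differentiable ℝ N := hNsm.differentiable (by simp)
  have hBd : Differentiable ℝ B := hBsm.differentiable (by simp)
  -- basic derivative facts
  have hab : ∀ s, HasDerivAt a (b s) s := fun s => mdot_hasDerivAt p (hαd s).hasDerivAt
  have hba : ∀ s, HasDerivAt b (a s) s := by
    intro s
    have h1 : HasDerivAt (deriv α) (α s + κg s • N s) s := by
      have := (hTd s).hasDerivAt; rwa [hF1 s] at this
    have h2 := mdot_hasDerivAt p h1
    have h3 : mdot p (α s + κg s • N s) = a s := by
      have hr := hrect s
      simp only [ha, mdot, Pi.add_apply, Pi.smul_apply, smul_eq_mul] at *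
      linear_combination (κg s) * hr
    rwa [h3] at h2
  have hcz : ∀ s, HasDerivAt c 0 s := by
    intro s
    have h1 : HasDerivAt B (-τg s • N s) s := by
      have := (hBd s).hasDerivAt; rwa [hF3 s] at this
    have h2 := mdot_hasDerivAt p h1
    have h3 : mdot p (-τg s • N s) = 0 := by
      have hr := hrect s
      simp only [mdot, Pi.smul_apply, smul_eq_mul] at *
      linear_combination (-τg s) * hr
    rwa [h3] at h2
  have hcconst : ∀ s, c s = c 0 := fun s =>
    is_const_of_deriv_eq_zero (fun x => (hcz x).differentiableAt) (fun x => (hcz x).deriv) s 0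
  -- κ b + τ c = 0
  have hbc : ∀ s, κg s * b s + τg s * c 0 = 0 := by
    intro s
    have h1 : HasDerivAt N (κg s • deriv α s + τg s • B s) s := by
      have := (hNd s).hasDerivAt; rwa [hF2 s] at this
    have h2 := mdot_hasDerivAt p h1
    have h3 : (fun t => mdot p (N t)) = fun _ => (0 : ℝ) := funext hrect
    rw [h3] at h2
    have h4 : mdot p (κg s • deriv α s + τg s • B s) = 0 :=
      ((hasDerivAt_const s (0 : ℝ)).unique h2).symm
    have h5 : mdot p (κg s • deriv α s + τg s • B s) = κg s * b s + τg s * c s := by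
      simp only [hb, hc, mdot, Pi.add_apply, Pi.smul_apply, smul_eq_mul]; ring
    rw [h5, hcconst s] at h4
    exact h4
  -- solve ODE a' = b, b' = a
  have hu : ∀ s, (a s - b s) * Real.exp s = (a 0 - b 0) := by
    intro s
    have hdu : ∀ x, HasDerivAt (fun t => (a t - b t) * Real.exp t) 0 x := by
      intro x
      have := (((hab x).fun_sub (hba x)).fun_mul (Real.hasDerivAt_exp x))
      refine this.congr_deriv ?_
      ring
    have := is_const_of_deriv_eq_zero (fun x => (hdu x).differentiableAt)
      (fun x => (hdu x).deriv) s 0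
    simpa using this
  have hv : ∀ s, (a s + b s) * Real.exp (-s) = (a 0 + b 0) := by
    intro s
    have hdu : ∀ x, HasDerivAt (fun t => (a t + b t) * Real.exp (-t)) 0 x := by
      intro x
      have hexp : HasDerivAt (fun t : ℝ => Real.exp (-t)) (-Real.exp (-x)) x := by
        have := (Real.hasDerivAt_exp (-x)).comp x (hasDerivAt_neg x)
        exact this.congr_deriv (by ring)
      have := ((hab x).fun_add (hba x)).fun_mul hexp
      refine this.congr_deriv ?_
      ring
    have := is_const_of_deriv_eq_zero (fun x => (hdu x).differentiableAt)
      (fun x => (hdu x).deriv) s 0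
    simpa using this
  have hbform : ∀ s, b s = a 0 * Real.sinh s + b 0 * Real.cosh s := by
    intro s
    have h1 := hu s
    have h2 := hv s
    rw [Real.exp_neg] at h2
    have hne := Real.exp_ne_zero s
    rw [Real.sinh_eq, Real.cosh_eq, Real.exp_neg]
    field_simp at h2 ⊢
    linear_combination Real.exp s * h2 - h1
  -- c 0 ≠ 0
  have hc0 : c 0 ≠ 0 := by
    intro h0
    have hb0 : ∀ s, b s = 0 := by
      intro s
      have := hbc s
      rw [h0, mul_zero, add_zero] at this
      exact (mul_eq_zero.mp this).resolve_left (ne_of_gt (hκpos s))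
    have ha0 : ∀ s, a s = 0 := by
      intro s
      have h1 := hba s
      have h2 : b = fun _ => (0 : ℝ) := funext hb0
      rw [h2] at h1
      exact ((hasDerivAt_const s (0 : ℝ)).unique h1).symm
    have := keyEq
    rw [show mdot p (α 0) = a 0 from rfl, show mdot p (deriv α 0) = b 0 from rfl,
      show mdot p (B 0) = c 0 from rfl, ha0 0, hb0 0, h0] at this
    norm_num at this
  -- conclude
  refine ⟨-(a 0) / c 0, -(b 0) / c 0, ?_, ?_⟩
  · have hkey : a 0 ^ 2 - b 0 ^ 2 + c 0 ^ 2 = 1 := keyEq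
    have hc2 : (0 : ℝ) < c 0 ^ 2 := by positivity
    have : (-(b 0) / c 0) ^ 2 - (-(a 0) / c 0) ^ 2 = (c 0 ^ 2 - 1) / c 0 ^ 2 := by
      field_simp
      linear_combination -hkey
    rw [this, div_lt_one hc2]
    linarith
  · intro s
    have h1 := hbc s
    have h2 := hbform s
    have hκne := ne_of_gt (hκpos s)
    field_simp
    linear_combination h1 - κg s * h2
end

section
/- Let (α, N, B, κ_g, τ_g) be a Frenet apparatus of a timelike unit speed non-geodesic curve in S³₁ and let p ∈ S³₁ (so ⟨p,p⟩ = 1) satisfy ⟨p, N(s)⟩ = 0 for all s ∈ ℝ. Then there exist constants n₁, n₂, n ∈ ℝ with n₁² − n₂² + n² = 1 such that for all s ∈ ℝ: ⟨p, α'(s)⟩ = n₁·sinh(s) + n₂·cosh(s), and ⟨p, N(s)⟩² + ⟨p, B(s)⟩² = n² (the squared norm of the component p⊥ of p orthogonal to the tangent direction of α). -/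
open Real

/-- Completeness relation for a pseudo-orthonormal frame of `ℝ⁴₁`. -/
lemma mdot_complete (a t n b p : Fin 4 → ℝ)
    (haa : mdot a a = 1) (htt : mdot t t = -1) (hnn : mdot n n = 1) (hbb : mdot b b = 1)
    (hat : mdot a t = 0) (han : mdot a n = 0) (hab : mdot a b = 0)
    (htn : mdot t n = 0) (htb : mdot t b = 0) (hnb : mdot n b = 0) :
    (mdot p a)^2 - (mdot p t)^2 + (mdot p n)^2 + (mdot p b)^2 = mdot p p := by
  classical
  simp only [mdot] at haa htt hnn hbb hat han hab htn htb hnb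
  set P : Matrix (Fin 4) (Fin 4) ℝ :=
    !![-(a 0), a 1, a 2, a 3; -(t 0), t 1, t 2, t 3;
       -(n 0), n 1, n 2, n 3; -(b 0), b 1, b 2, b 3] with hP
  set Q : Matrix (Fin 4) (Fin 4) ℝ :=
    !![a 0, -(t 0), n 0, b 0; a 1, -(t 1), n 1, b 1;
       a 2, -(t 2), n 2, b 2; a 3, -(t 3), n 3, b 3] with hQ
  have h1 : P * Q = 1 := by
    ext i j
    fin_cases i <;> fin_cases j <;>
      simp [hP, hQ, Matrix.mul_apply, Fin.sum_univ_four, Matrix.one_apply] <;> linarith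
  have h2 : Q * P = 1 := mul_eq_one_comm.mp h1
  have e : ∀ j k : Fin 4, (Q * P) j k = (1 : Matrix (Fin 4) (Fin 4) ℝ) j k := by
    intro j k; rw [h2]
  have e00 : a 0 * a 0 - t 0 * t 0 + n 0 * n 0 + b 0 * b 0 = -1 := by
    have := e 0 0; simp [hP, hQ, Matrix.mul_apply, Fin.sum_univ_four, Matrix.one_apply] at this; linarith
  have e01 : a 0 * a 1 - t 0 * t 1 + n 0 * n 1 + b 0 * b 1 = 0 := by
    have := e 0 1; simp [hP, hQ, Matrix.mul_apply, Fin.sum_univ_four, Matrix.one_apply] at this; linarith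
  have e02 : a 0 * a 2 - t 0 * t 2 + n 0 * n 2 + b 0 * b 2 = 0 := by
    have := e 0 2; simp [hP, hQ, Matrix.mul_apply, Fin.sum_univ_four, Matrix.one_apply] at this; linarith
  have e03 : a 0 * a 3 - t 0 * t 3 + n 0 * n 3 + b 0 * b 3 = 0 := by
    have := e 0 3; simp [hP, hQ, Matrix.mul_apply, Fin.sum_univ_four, Matrix.one_apply] at this; linarith
  have e11 : a 1 * a 1 - t 1 * t 1 + n 1 * n 1 + b 1 * b 1 = 1 := by
    have := e 1 1; simp [hP, hQ, Matrix.mul_apply, Fin.sum_univ_four, Matrix.one_apply] at this; linarith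
  have e12 : a 1 * a 2 - t 1 * t 2 + n 1 * n 2 + b 1 * b 2 = 0 := by
    have := e 1 2; simp [hP, hQ, Matrix.mul_apply, Fin.sum_univ_four, Matrix.one_apply] at this; linarith
  have e13 : a 1 * a 3 - t 1 * t 3 + n 1 * n 3 + b 1 * b 3 = 0 := by
    have := e 1 3; simp [hP, hQ, Matrix.mul_apply, Fin.sum_univ_four, Matrix.one_apply] at this; linarith
  have e22 : a 2 * a 2 - t 2 * t 2 + n 2 * n 2 + b 2 * b 2 = 1 := by
    have := e 2 2; simp [hP, hQ, Matrix.mul_apply, Fin.sum_univ_four, Matrix.one_apply] at this; linarith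
  have e23 : a 2 * a 3 - t 2 * t 3 + n 2 * n 3 + b 2 * b 3 = 0 := by
    have := e 2 3; simp [hP, hQ, Matrix.mul_apply, Fin.sum_univ_four, Matrix.one_apply] at this; linarith
  have e33 : a 3 * a 3 - t 3 * t 3 + n 3 * n 3 + b 3 * b 3 = 1 := by
    have := e 3 3; simp [hP, hQ, Matrix.mul_apply, Fin.sum_univ_four, Matrix.one_apply] at this; linarith
  simp only [mdot]
  linear_combination (p 0 * p 0) * e00 - (2 * p 0 * p 1) * e01 - (2 * p 0 * p 2) * e02
    - (2 * p 0 * p 3) * e03 + (p 1 * p 1) * e11 + (2 * p 1 * p 2) * e12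
    + (2 * p 1 * p 3) * e13 + (p 2 * p 2) * e22 + (2 * p 2 * p 3) * e23 + (p 3 * p 3) * e33

lemma hasDerivAt_mdot_s7 (p : Fin 4 → ℝ) {f : ℝ → Fin 4 → ℝ} {v : Fin 4 → ℝ} {s : ℝ}
    (h : HasDerivAt f v s) :
    HasDerivAt (fun t => mdot p (f t)) (mdot p v) s := by
  have h0 := hasDerivAt_pi.mp h 0
  have h1 := hasDerivAt_pi.mp h 1
  have h2 := hasDerivAt_pi.mp h 2
  have h3 := hasDerivAt_pi.mp h 3
  show HasDerivAt (fun t => -(p 0 * f t 0) + p 1 * f t 1 + p 2 * f t 2 + p 3 * f t 3)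
    (-(p 0 * v 0) + p 1 * v 1 + p 2 * v 2 + p 3 * v 3) s
  exact
    ((((h0.const_mul (p 0)).neg).add (h1.const_mul (p 1))).add (h2.const_mul (p 2))).add
      (h3.const_mul (p 3))

lemma mdot_add (p x y : Fin 4 → ℝ) : mdot p (x + y) = mdot p x + mdot p y := by
  simp [mdot]; ring

lemma mdot_smul (p : Fin 4 → ℝ) (c : ℝ) (x : Fin 4 → ℝ) : mdot p (c • x) = c * mdot p x := by
  simp [mdot]; ring

/-- For a timelike rectifying curve in `S³₁` with respect to `p ∈ S³₁`, one has
`⟨p, T(s)⟩ = n₁ sinh s + n₂ cosh s` and `|p⊥|² = n²` with `n₁² - n₂² + n² = 1`. -/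
theorem tangent_component_of_timelike_rectifying_curve
    (α N B : ℝ → Fin 4 → ℝ) (κg τg : ℝ → ℝ)
    (hαsm : ContDiff ℝ (⊤ : ℕ∞) α) (hNsm : ContDiff ℝ (⊤ : ℕ∞) N)
    (hBsm : ContDiff ℝ (⊤ : ℕ∞) B)
    (hκsm : ContDiff ℝ (⊤ : ℕ∞) κg) (hτsm : ContDiff ℝ (⊤ : ℕ∞) τg)
    (hκpos : ∀ s, 0 < κg s)
    (hα1 : ∀ s, mdot (α s) (α s) = 1)
    (hT1 : ∀ s, mdot (deriv α s) (deriv α s) = -1)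
    (hN1 : ∀ s, mdot (N s) (N s) = 1)
    (hB1 : ∀ s, mdot (B s) (B s) = 1)
    (hαT : ∀ s, mdot (α s) (deriv α s) = 0)
    (hαN : ∀ s, mdot (α s) (N s) = 0)
    (hαB : ∀ s, mdot (α s) (B s) = 0)
    (hTN : ∀ s, mdot (deriv α s) (N s) = 0)
    (hTB : ∀ s, mdot (deriv α s) (B s) = 0)
    (hNB : ∀ s, mdot (N s) (B s) = 0)
    (hF1 : ∀ s, deriv (deriv α) s = α s + κg s • N s)
    (hF2 : ∀ s, deriv N s = κg s • deriv α s + τg s • B s)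
    (hF3 : ∀ s, deriv B s = -τg s • N s)
    (p : Fin 4 → ℝ) (hp : mdot p p = 1)
    (hrect : ∀ s, mdot p (N s) = 0) :
    ∃ n₁ n₂ n : ℝ, n₁ ^ 2 - n₂ ^ 2 + n ^ 2 = 1 ∧
      ∀ s, mdot p (deriv α s) = n₁ * Real.sinh s + n₂ * Real.cosh s ∧
        (mdot p (N s)) ^ 2 + (mdot p (B s)) ^ 2 = n ^ 2 := by
  have hαd : Differentiable ℝ α := hαsm.differentiable (by simp)
  have hα'd : Differentiable ℝ (deriv α) :=
    ((contDiff_infty_iff_deriv.mp hαsm).2).differentiable (by simp)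
  have hBd : Differentiable ℝ B := hBsm.differentiable (by simp)
  set F : ℝ → ℝ := fun s => mdot p (deriv α s) with hF
  set G : ℝ → ℝ := fun s => mdot p (α s) with hG
  have hGd : ∀ s, HasDerivAt G (F s) s := fun s =>
    hasDerivAt_mdot_s7 p (hαd s).hasDerivAt
  have hFd : ∀ s, HasDerivAt F (G s) s := by
    intro s
    have h := hasDerivAt_mdot_s7 p (hα'd s).hasDerivAt
    rw [hF1 s, mdot_add, mdot_smul, hrect s] at h
    simpa using h
  -- the B-component of p is constant
  have hBc : ∀ s, mdot p (B s) = mdot p (B 0) := by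
    have hc : ∀ x, HasDerivAt (fun s => mdot p (B s)) 0 x := by
      intro x
      have h := hasDerivAt_mdot_s7 p (hBd x).hasDerivAt
      rw [hF3 x, mdot_smul, hrect x, mul_zero] at h
      exact h
    intro s
    exact is_const_of_deriv_eq_zero (fun x => (hc x).differentiableAt)
      (fun x => (hc x).deriv) s 0
  -- the ODE F' = G, G' = F
  have hu : ∀ s, (F s + G s) * Real.exp (-s) = (F 0 + G 0) * Real.exp 0 := by
    intro s
    have hc : ∀ x, HasDerivAt (fun s => (F s + G s) * Real.exp (-s)) 0 x := by
      intro x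
      have h1 : HasDerivAt (fun s => F s + G s) (G x + F x) x := (hFd x).add (hGd x)
      have h2 : HasDerivAt (fun s : ℝ => Real.exp (-s)) (-Real.exp (-x)) x := by
        simpa [Function.comp_def] using (Real.hasDerivAt_exp (-x)).comp x (hasDerivAt_neg x)
      have := h1.mul h2
      exact this.congr_deriv (by ring)
    simpa using is_const_of_deriv_eq_zero (fun x => (hc x).differentiableAt)
      (fun x => (hc x).deriv) s 0
  have hv : ∀ s, (F s - G s) * Real.exp s = (F 0 - G 0) * Real.exp 0 := by
    intro s
    have hc : ∀ x, HasDerivAt (fun s => (F s - G s) * Real.exp s) 0 x := by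
      intro x
      have h1 : HasDerivAt (fun s => F s - G s) (G x - F x) x := (hFd x).sub (hGd x)
      have := h1.mul (Real.hasDerivAt_exp x)
      exact this.congr_deriv (by ring)
    exact is_const_of_deriv_eq_zero (fun x => (hc x).differentiableAt)
      (fun x => (hc x).deriv) s 0
  refine ⟨G 0, F 0, mdot p (B 0), ?_, ?_⟩
  · -- the constraint, from the completeness relation at s = 0
    have hcomp := mdot_complete (α 0) (deriv α 0) (N 0) (B 0) p (hα1 0) (hT1 0) (hN1 0)
      (hB1 0) (hαT 0) (hαN 0) (hαB 0) (hTN 0) (hTB 0) (hNB 0)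
    rw [hp, hrect 0] at hcomp
    have : G 0 = mdot p (α 0) := rfl
    have : F 0 = mdot p (deriv α 0) := rfl
    simp only [hF, hG]
    nlinarith [hcomp]
  · intro s
    constructor
    · have h1 := hu s
      have h2 := hv s
      have he : Real.exp (-s) * Real.exp s = 1 := by
        rw [← Real.exp_add]; simp
      show F s = G 0 * Real.sinh s + F 0 * Real.cosh s
      simp only [Real.exp_zero, mul_one] at h1 h2
      rw [Real.sinh_eq, Real.cosh_eq]
      linear_combination (Real.exp s / 2) * h1 + (Real.exp (-s) / 2) * h2 - F s * he
    · rw [hrect s, hBc s]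
      ring
end

section
/- Let h : ℝ → ℝ be a smooth function with h(t) > 0 for all t that satisfies the differential equation h(t)·h''(t) − 2·h'(t)² + h(t)² = 0 for all t ∈ ℝ. If h'(t₁) = 0 for some t₁ ∈ ℝ, then h(t) = h(t₁)·sech(t − t₁) for all t ∈ ℝ. -/
open Real

/-- A positive solution of `h h'' - 2 (h')² + h² = 0` with a critical point at `t₁`
is `h(t) = h(t₁) sech (t - t₁)`. -/
theorem ode_solution_sech
    (h : ℝ → ℝ) (hsm : ContDiff ℝ (⊤ : ℕ∞) h)
    (hpos : ∀ t, 0 < h t)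
    (hode : ∀ t, h t * deriv (deriv h) t - 2 * (deriv h t) ^ 2 + (h t) ^ 2 = 0)
    (t₁ : ℝ) (hcrit : deriv h t₁ = 0) :
    ∀ t, h t = h t₁ * (Real.cosh (t - t₁))⁻¹ := by
  have hne : ∀ t, h t ≠ 0 := fun t => (hpos t).ne'
  obtain ⟨hdiff, hsm'⟩ := contDiff_infty_iff_deriv.mp hsm
  have hdiff' : Differentiable ℝ (deriv h) := hsm'.differentiable (by simp)
  have H1 : ∀ t, HasDerivAt h (deriv h t) t := fun t => (hdiff t).hasDerivAt
  have H2 : ∀ t, HasDerivAt (deriv h) (deriv (deriv h) t) t :=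
    fun t => (hdiff' t).hasDerivAt
  set c : ℝ := (h t₁)⁻¹ with hc
  -- g = 1/h, gd = g'
  set g : ℝ → ℝ := fun t => (h t)⁻¹ with hg
  set gd : ℝ → ℝ := fun t => -(deriv h t) / (h t) ^ 2 with hgd
  have Hg : ∀ t, HasDerivAt g (gd t) t := fun t => (H1 t).inv (hne t)
  have Hgd : ∀ t, HasDerivAt gd (g t) t := by
    intro t
    have : HasDerivAt gd
        ((-(deriv (deriv h) t) * (h t) ^ 2 - (-(deriv h t)) * (2 * (h t) * deriv h t))
          / ((h t) ^ 2) ^ 2) t := by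
      exact ((H2 t).neg.div (((H1 t).pow 2).congr_deriv (by ring)) (pow_ne_zero 2 (hne t)))
    convert this using 1
    have hO := hode t
    have hh := hne t
    simp only [hg]
    field_simp [hg]
    nlinarith [hpos t, sq_nonneg (h t), hO]
  -- u = g - c cosh(t - t₁), ud = u'
  set u : ℝ → ℝ := fun t => g t - c * Real.cosh (t - t₁) with hu
  set ud : ℝ → ℝ := fun t => gd t - c * Real.sinh (t - t₁) with hud
  have Hcosh : ∀ t, HasDerivAt (fun t => Real.cosh (t - t₁)) (Real.sinh (t - t₁)) t := by
    intro t
    simpa using ((hasDerivAt_id t).sub_const t₁).cosh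
  have Hsinh : ∀ t, HasDerivAt (fun t => Real.sinh (t - t₁)) (Real.cosh (t - t₁)) t := by
    intro t
    simpa using ((hasDerivAt_id t).sub_const t₁).sinh
  have Hu : ∀ t, HasDerivAt u (ud t) t := fun t => (Hg t).sub ((Hcosh t).const_mul c)
  have Hud : ∀ t, HasDerivAt ud (u t) t := fun t => (Hgd t).sub ((Hsinh t).const_mul c)
  have hu1 : u t₁ = 0 := by simp [hu, hg, hc]
  have hud1 : ud t₁ = 0 := by simp [hud, hgd, hcrit]
  -- v = ud - u satisfies v' = -v, v t₁ = 0 ⇒ v ≡ 0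
  have hv0 : ∀ t, ud t - u t = 0 := by
    have Hw : ∀ t, HasDerivAt (fun t => (ud t - u t) * Real.exp t) 0 t := by
      intro t
      have := ((Hud t).sub (Hu t)).mul (Real.hasDerivAt_exp t)
      exact this.congr_deriv (by simp only [Pi.sub_apply]; ring)
    have hconst := is_const_of_deriv_eq_zero (fun t => ((Hw t).differentiableAt))
      (fun t => (Hw t).deriv)
    intro t
    have := hconst t t₁
    rw [hud1, hu1] at this
    have h2 : (ud t - u t) * Real.exp t = 0 := by simpa using this
    exact (mul_eq_zero.mp h2).resolve_right (Real.exp_ne_zero t)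
  -- now u' = u, u t₁ = 0 ⇒ u ≡ 0
  have hu0 : ∀ t, u t = 0 := by
    have Hz : ∀ t, HasDerivAt (fun t => u t * Real.exp (-t)) 0 t := by
      intro t
      have he : HasDerivAt (fun t : ℝ => Real.exp (-t)) (-Real.exp (-t)) t := by
        simpa using (hasDerivAt_id t).neg.exp
      have := (Hu t).mul he
      refine this.congr_deriv ?_
      have := hv0 t
      nlinarith [Real.exp_pos (-t)]
    have hconst := is_const_of_deriv_eq_zero (fun t => ((Hz t).differentiableAt))
      (fun t => (Hz t).deriv)
    intro t
    have := hconst t t₁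
    rw [hu1] at this
    have h2 : u t * Real.exp (-t) = 0 := by simpa using this
    exact (mul_eq_zero.mp h2).resolve_right (Real.exp_ne_zero (-t))
  intro t
  have := hu0 t
  have hch := Real.cosh_pos (t - t₁)
  have : (h t)⁻¹ = (h t₁)⁻¹ * Real.cosh (t - t₁) := by
    have := hu0 t
    simp only [hu, hg, hc] at this
    linarith
  field_simp [hne t, hne t₁, hch.ne'] at this ⊢
  linarith
end

section
/- Let a > 0 and t₀ ∈ ℝ, and define η(t) := arctan(a·sech(t + t₀)) for t ∈ ℝ. Then for all t ∈ ℝ: (sin²(η(t)) − η'(t)²)²·(a² + cosh²(t + t₀))³ = a²·(1 + a²)²·sin²(η(t)); equivalently, writing w(t)² = sin²(η(t)) − η'(t)², one has w(t)⁴/sin²(η(t)) = a²(1+a²)²·(a² + cosh²(t + t₀))⁻³. -/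
open Real

/-- For `η(t) = arctan (a sech (t + t₀))` with `a > 0`:
`(sin²(η) - (η')²)² (a² + cosh²(t+t₀))³ = a² (1+a²)² sin²(η)`. -/
theorem speed_identity_arctan_sech
    (a t₀ : ℝ) (ha : 0 < a)
    (η : ℝ → ℝ) (hη : ∀ t, η t = Real.arctan (a * (Real.cosh (t + t₀))⁻¹)) :
    ∀ t, (Real.sin (η t) ^ 2 - (deriv η t) ^ 2) ^ 2
          * (a ^ 2 + Real.cosh (t + t₀) ^ 2) ^ 3
        = a ^ 2 * (1 + a ^ 2) ^ 2 * Real.sin (η t) ^ 2 := by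
  have hηf : η = fun t => Real.arctan (a * (Real.cosh (t + t₀))⁻¹) := funext hη
  intro t
  have hc : Real.cosh (t + t₀) ≠ 0 := (Real.cosh_pos (t + t₀)).ne'
  have hcpos : (0:ℝ) < Real.cosh (t + t₀) := Real.cosh_pos _
  set c := Real.cosh (t + t₀) with hcdef
  set s := Real.sinh (t + t₀) with hsdef
  have hD : (0:ℝ) < a ^ 2 + c ^ 2 := by positivity
  -- derivative
  have h1 : HasDerivAt (fun u : ℝ => u + t₀) 1 t := (hasDerivAt_id t).add_const t₀
  have h2 : HasDerivAt (fun u : ℝ => Real.cosh (u + t₀)) (s * 1) t :=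
    by have := (Real.hasDerivAt_cosh (t + t₀)).comp t h1; exact this
  have h3 := (h2.inv hc).const_mul a
  have h4 := (Real.hasDerivAt_arctan (a * c⁻¹)).comp t h3
  have hder : deriv η t = -(a * s) / (a ^ 2 + c ^ 2) := by
    rw [hηf]
    rw [show (fun t => Real.arctan (a * (Real.cosh (t + t₀))⁻¹)) = (Real.arctan ∘ fun y => a * (fun u => Real.cosh (u + t₀))⁻¹ y) from rfl, h4.deriv]
    have hc2 : c ^ 2 = 1 + s ^ 2 := by rw [hcdef, hsdef, Real.cosh_sq]; ring
    field_simp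
    nlinarith [hc2, sq_nonneg s, sq_nonneg c]
  -- sine
  have hsin : Real.sin (η t) ^ 2 = a ^ 2 / (a ^ 2 + c ^ 2) := by
    rw [hη, Real.sin_arctan]
    rw [div_pow]
    rw [Real.sq_sqrt (by positivity : (0:ℝ) ≤ 1 + (a * c⁻¹) ^ 2)]
    field_simp
    ring
  rw [hsin, hder]
  have hc2 : c ^ 2 = 1 + s ^ 2 := by rw [hcdef, hsdef, Real.cosh_sq]; ring
  rw [hc2]
  field_simp
  ring
end
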